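/- Let k, n be positive integers and let s, t be integers with 0 ≤ s < s + k ≤ t ≤ n·k. Let W be the set of all words w : Fin n → Fin (k+1) whose weight h(w) = Σᵢ wᵢ satisfies s ≤ h(w) ≤ t, and let N = |W|. Then there exists a function f : ZMod N → Fin (k+1) such that the map sending each i ∈ ZMod N to the word (j : Fin n) ↦ f(i + j) is a bijection from ZMod N onto W. -/

import Mathlib

/-- The weight of a word over the alphabet `{0, 1, …, k}`: the sum of its letters. -/
def wt {n k : ℕ} (w : Fin n → Fin (k + 1)) : ℕ := ∑ i, (w i : ℕ)

namespace UcycAux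

/-- crossing lemma -/
lemma cross {β : Type*} (R : β → β → Prop) (C : Set β) {a b : β}
    (h : Relation.ReflTransGen R a b) : a ∈ C → b ∉ C → ∃ x ∈ C, ∃ y ∉ C, R x y := by
  induction h with
  | refl => exact fun ha hb => absurd ha hb
  | @tail c d hac hcd ih =>
    intro ha hb
    by_cases hc : c ∈ C
    · exact ⟨c, hc, d, hb, hcd⟩
    · exact ih ha hc

/-- existence of a word of any feasible weight -/
lemma exists_word (n k m : ℕ) (h : m ≤ n * k) : ∃ w : Fin n → Fin (k + 1), wt w = m := by
  induction n generalizing m with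
  | zero =>
    refine ⟨fun i => i.elim0, ?_⟩
    simp only [Nat.zero_mul, Nat.le_zero] at h
    simp [wt, h]
  | succ n ih =>
    have h' : m ≤ n * k + k := by rw [Nat.succ_mul] at h; exact h
    obtain ⟨w, hw⟩ := ih (m - min k m) (by omega)
    refine ⟨Fin.cons ⟨min k m, by omega⟩ w, ?_⟩
    unfold wt at hw ⊢
    rw [Fin.sum_univ_succ]
    simp only [Fin.cons_zero, Fin.cons_succ]
    rw [hw]
    show min k m + (m - min k m) = m
    omega

variable {n k s t : ℕ}

/-- The words of weight between `s` and `t`. -/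
abbrev Wd (n k s t : ℕ) : Type := {w : Fin n → Fin (k + 1) // s ≤ wt w ∧ wt w ≤ t}

def tlw (w : Wd n k s t) : Fin (n - 1) → Fin (k + 1) :=
  fun j => w.1 ⟨j.1, by have := j.2; omega⟩

def hdw (w : Wd n k s t) : Fin (n - 1) → Fin (k + 1) :=
  fun j => w.1 ⟨j.1 + 1, by have := j.2; omega⟩

lemma wt_comp_add [NeZero n] (w : Fin n → Fin (k + 1)) (c : Fin n) :
    wt (fun j => w (j + c)) = wt w :=
  Fintype.sum_equiv (Equiv.addRight c) _ _ (fun _ => rfl)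

lemma wt_comp_sub [NeZero n] (w : Fin n → Fin (k + 1)) (c : Fin n) :
    wt (fun j => w (j - c)) = wt w :=
  Fintype.sum_equiv (Equiv.subRight c) _ _ (fun _ => rfl)

/-- cyclic rotation of a word, as a permutation of `Wd`. -/
def rotw [NeZero n] : Equiv.Perm (Wd n k s t) where
  toFun w := ⟨fun j => w.1 (j + 1), by rw [wt_comp_add]; exact w.2⟩
  invFun w := ⟨fun j => w.1 (j - 1), by rw [wt_comp_sub]; exact w.2⟩
  left_inv w := Subtype.ext (funext fun j => by simp)
  right_inv w := Subtype.ext (funext fun j => by simp)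

lemma tlw_rotw [NeZero n] (w : Wd n k s t) : tlw (rotw w) = hdw w := by
  funext j
  show w.1 (⟨j.1, _⟩ + 1) = w.1 ⟨j.1 + 1, _⟩
  have hj := j.2
  have harg : (⟨j.1, by omega⟩ + 1 : Fin n) = ⟨j.1 + 1, by omega⟩ := by
    apply Fin.ext
    simp only [Fin.val_add, Fin.val_one', Fin.val_mk]
    have e1 : (1 % n) = 1 := Nat.mod_eq_of_lt (by omega)
    rw [e1]
    exact Nat.mod_eq_of_lt (by omega)
  rw [harg]

open Fin.NatCast in
lemma rotw_pow [NeZero n] (m : ℕ) (w : Wd n k s t) (j : Fin n) :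
    ((rotw ^ m) w).1 j = w.1 (j + (m : Fin n)) := by
  induction m generalizing j with
  | zero => simp
  | succ m ih =>
    have h1 : (rotw ^ (m + 1)) w = rotw ((rotw ^ m) w) := by
      rw [pow_succ', Equiv.Perm.mul_apply]
    rw [h1]
    show ((rotw ^ m) w).1 (j + 1) = _
    rw [ih (j + 1)]
    push_cast
    rw [add_assoc, add_comm (1 : Fin n)]

lemma rotw_n [NeZero n] (w : Wd n k s t) : (rotw ^ n) w = w :=
  Subtype.ext (funext fun j => by rw [rotw_pow, Fin.natCast_self, add_zero])

/-- adjacency of words (sharing a vertex in the transition graph). -/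
def Rel (a b : Wd n k s t) : Prop :=
  hdw a = hdw b ∨ tlw a = tlw b ∨ hdw a = tlw b ∨ tlw a = hdw b

lemma rel_symm : Symmetric (Rel (n := n) (k := k) (s := s) (t := t)) := by
  rintro a b (h | h | h | h)
  · exact Or.inl h.symm
  · exact Or.inr (Or.inl h.symm)
  · exact Or.inr (Or.inr (Or.inr h.symm))
  · exact Or.inr (Or.inr (Or.inl h.symm))

lemma chain [NeZero n] (m : ℕ) (w : Wd n k s t) :
    Relation.ReflTransGen Rel w ((rotw ^ m) w) := by
  induction m with
  | zero => exact Relation.ReflTransGen.refl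
  | succ m ih =>
    refine ih.tail ?_
    have h1 : (rotw ^ (m + 1)) w = rotw ((rotw ^ m) w) := by
      rw [pow_succ', Equiv.Perm.mul_apply]
    rw [h1]
    exact Or.inr (Or.inr (Or.inl (tlw_rotw _).symm))

lemma conn_update [NeZero n] (w u : Wd n k s t) (j₀ : Fin n)
    (h : ∀ j, j ≠ j₀ → w.1 j = u.1 j) : Relation.ReflTransGen Rel w u := by
  have hA := chain j₀.1 w
  have hB := chain (n - j₀.1) ((rotw ^ j₀.1) u)
  have hBu : (rotw ^ (n - j₀.1)) ((rotw ^ j₀.1) u) = u := by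
    rw [← Equiv.Perm.mul_apply, ← pow_add, Nat.sub_add_cancel j₀.2.le, rotw_n]
  rw [hBu] at hB
  have hmid : Rel ((rotw ^ j₀.1) w) ((rotw ^ j₀.1) u) := by
    left
    funext j
    show ((rotw ^ j₀.1) w).1 ⟨j.1 + 1, _⟩ = ((rotw ^ j₀.1) u).1 ⟨j.1 + 1, _⟩
    rw [rotw_pow, rotw_pow]
    apply h
    rw [Fin.cast_val_eq_self j₀]
    intro hc
    have hc0 : (⟨j.1 + 1, by have := j.2; omega⟩ : Fin n) = 0 := by
      have := congrArg (fun z => z - j₀) hc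
      simpa using this
    have := congrArg Fin.val hc0
    simp at this
  exact hA.trans ((Relation.ReflTransGen.single hmid).trans hB)

lemma wt_update (w : Fin n → Fin (k + 1)) (i : Fin n) (v : Fin (k + 1)) :
    wt (Function.update w i v) + (w i : ℕ) = wt w + (v : ℕ) := by
  classical
  unfold wt
  have hupd : ∀ x, ((Function.update w i v x : Fin (k + 1)) : ℕ)
      = Function.update (fun y => ((w y : ℕ))) i (v : ℕ) x :=
    fun x => Function.apply_update (fun _ (y : Fin (k + 1)) => (y : ℕ)) w i v x
  simp only [hupd]
  rw [Finset.sum_update_of_mem (Finset.mem_univ i), Finset.sdiff_singleton_eq_erase,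
    ← Finset.add_sum_erase _ _ (Finset.mem_univ i)]
  omega

lemma conn_to (hn : 0 < n) (hst : s + k ≤ t) (u : Wd n k s t) (hu : wt u.1 = t) (D : ℕ) :
    ∀ w : Wd n k s t,
      (∑ j, (((w.1 j : ℕ) - (u.1 j : ℕ)) + ((u.1 j : ℕ) - (w.1 j : ℕ)))) ≤ D →
      Relation.ReflTransGen Rel w u := by
  haveI : NeZero n := ⟨hn.ne'⟩
  induction D with
  | zero =>
    intro w hw
    have hweq : w = u := by
      apply Subtype.ext; funext j
      have h0 := Finset.sum_eq_zero_iff.1 (Nat.le_zero.1 hw) j (Finset.mem_univ j)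
      exact Fin.ext (by omega)
    rw [hweq]
  | succ D ih =>
    intro w hw
    by_cases hwu : w = u
    · rw [hwu]
    have hne : ∃ j, (w.1 j : ℕ) ≠ (u.1 j : ℕ) := by
      by_contra hc; push_neg at hc
      exact hwu (Subtype.ext (funext fun j => Fin.ext (hc j)))
    have hwle : wt w.1 ≤ t := w.2.2
    have hwge : s ≤ wt w.1 := w.2.1
    have hsum : ∀ (x : Fin n → Fin (k + 1)) (i : Fin n),
        (∑ j, (((x j : ℕ) - (u.1 j : ℕ)) + ((u.1 j : ℕ) - (x j : ℕ))))
          = (((x i : ℕ) - (u.1 i : ℕ)) + ((u.1 i : ℕ) - (x i : ℕ)))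
            + ∑ j ∈ Finset.univ.erase i,
                (((x j : ℕ) - (u.1 j : ℕ)) + ((u.1 j : ℕ) - (x j : ℕ))) :=
      fun x i => (Finset.add_sum_erase _ _ (Finset.mem_univ i)).symm
    rcases eq_or_lt_of_le hwle with heq | hlt
    · -- weight exactly t : decrease a too-large coordinate
      have hex : ∃ i, (u.1 i : ℕ) < (w.1 i : ℕ) := by
        by_contra hc; push_neg at hc
        obtain ⟨j, hj⟩ := hne
        have hlt2 : wt w.1 < wt u.1 :=
          Finset.sum_lt_sum (fun i _ => hc i)
            ⟨j, Finset.mem_univ j, lt_of_le_of_ne (hc j) hj⟩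
        omega
      obtain ⟨i, hi⟩ := hex
      have hk1 : (w.1 i : ℕ) ≤ k := Nat.lt_succ_iff.1 (w.1 i).2
      have h1 := wt_update w.1 i (u.1 i)
      have hmem : s ≤ wt (Function.update w.1 i (u.1 i))
          ∧ wt (Function.update w.1 i (u.1 i)) ≤ t := by constructor <;> omega
      set w' : Wd n k s t := ⟨Function.update w.1 i (u.1 i), hmem⟩ with hw'def
      have hval : ∀ j, j ≠ i → w'.1 j = w.1 j :=
        fun j hj => Function.update_of_ne hj _ _
      have hvi : (w'.1 i : ℕ) = (u.1 i : ℕ) := by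
        show ((Function.update w.1 i (u.1 i) i : Fin (k + 1)) : ℕ) = _
        rw [Function.update_self]
      have hrest : (∑ j ∈ Finset.univ.erase i,
            (((w'.1 j : ℕ) - (u.1 j : ℕ)) + ((u.1 j : ℕ) - (w'.1 j : ℕ))))
          = ∑ j ∈ Finset.univ.erase i,
            (((w.1 j : ℕ) - (u.1 j : ℕ)) + ((u.1 j : ℕ) - (w.1 j : ℕ))) :=
        Finset.sum_congr rfl fun j hj => by rw [hval j (Finset.ne_of_mem_erase hj)]
      have hmu : (∑ j, (((w'.1 j : ℕ) - (u.1 j : ℕ)) + ((u.1 j : ℕ) - (w'.1 j : ℕ)))) ≤ D := by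
        have e1 := hsum w.1 i
        have e2 := hsum w'.1 i
        rw [e2, hrest, hvi]
        rw [e1] at hw
        omega
      exact (conn_update w w' i fun j hj => (hval j hj).symm).trans (ih w' hmu)
    · -- weight < t : increase a too-small coordinate by one
      have hex : ∃ i, (w.1 i : ℕ) < (u.1 i : ℕ) := by
        by_contra hc; push_neg at hc
        have : wt u.1 ≤ wt w.1 := Finset.sum_le_sum fun i _ => hc i
        omega
      obtain ⟨i, hi⟩ := hex
      have hik : (u.1 i : ℕ) < k + 1 := (u.1 i).2
      set v : Fin (k + 1) := ⟨(w.1 i : ℕ) + 1, by omega⟩ with hvdef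
      have h1 := wt_update w.1 i v
      have hv : (v : ℕ) = (w.1 i : ℕ) + 1 := rfl
      have hmem : s ≤ wt (Function.update w.1 i v)
          ∧ wt (Function.update w.1 i v) ≤ t := by constructor <;> omega
      set w' : Wd n k s t := ⟨Function.update w.1 i v, hmem⟩ with hw'def
      have hval : ∀ j, j ≠ i → w'.1 j = w.1 j :=
        fun j hj => Function.update_of_ne hj _ _
      have hvi : (w'.1 i : ℕ) = (w.1 i : ℕ) + 1 := by
        show ((Function.update w.1 i v i : Fin (k + 1)) : ℕ) = _
        rw [Function.update_self]
      have hrest : (∑ j ∈ Finset.univ.erase i,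
            (((w'.1 j : ℕ) - (u.1 j : ℕ)) + ((u.1 j : ℕ) - (w'.1 j : ℕ))))
          = ∑ j ∈ Finset.univ.erase i,
            (((w.1 j : ℕ) - (u.1 j : ℕ)) + ((u.1 j : ℕ) - (w.1 j : ℕ))) :=
        Finset.sum_congr rfl fun j hj => by rw [hval j (Finset.ne_of_mem_erase hj)]
      have hmu : (∑ j, (((w'.1 j : ℕ) - (u.1 j : ℕ)) + ((u.1 j : ℕ) - (w'.1 j : ℕ)))) ≤ D := by
        have e1 := hsum w.1 i
        have e2 := hsum w'.1 i
        rw [e2, hrest, hvi]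
        rw [e1] at hw
        omega
      exact (conn_update w w' i fun j hj => (hval j hj).symm).trans (ih w' hmu)

end UcycAux

open Equiv Equiv.Perm

lemma merge_sameCycle {α : Type*} [Finite α] [DecidableEq α] (σ : Equiv.Perm α) (x y : α)
    (hxy : ¬ σ.SameCycle x y) (z : α)
    (hz : σ.SameCycle x z ∨ σ.SameCycle y z) :
    (σ * Equiv.swap x y).SameCycle x z := by
  set τ := σ * Equiv.swap x y with hτdef
  have hτx : τ x = σ y := by simp [hτdef]
  have hτy : τ y = σ x := by simp [hτdef]
  have hτz : ∀ w, w ≠ x → w ≠ y → τ w = σ w := fun w h1 h2 => by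
    simp [hτdef, Equiv.swap_apply_of_ne_of_ne h1 h2]
  have hy : τ.SameCycle x y := by
    by_contra hny
    set Ws : Set α := {w | σ.SameCycle y w ∧ τ.SameCycle x w} with hWs
    have hWσ : ∀ w ∈ Ws, σ w ∈ Ws := by
      rintro w ⟨h1, h2⟩
      have hwx : w ≠ x := by
        rintro rfl; exact hxy h1.symm
      have hwy : w ≠ y := by
        rintro rfl; exact hny h2
      refine ⟨h1.apply_right, ?_⟩
      have := h2.apply_right
      rwa [hτz w hwx hwy] at this
    have hbase : σ y ∈ Ws := by
      refine ⟨(Equiv.Perm.SameCycle.refl σ y).apply_right, ?_⟩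
      have := (Equiv.Perm.SameCycle.refl τ x).apply_right
      rwa [hτx] at this
    have hall : ∀ m : ℕ, (σ ^ (m + 1)) y ∈ Ws := by
      intro m
      induction m with
      | zero => simpa using hbase
      | succ m ih =>
        have h : (σ ^ (m + 1 + 1)) y = σ ((σ ^ (m + 1)) y) := by
          rw [pow_succ', Equiv.Perm.mul_apply]
        rw [h]
        exact hWσ _ ih
    have hd : 0 < orderOf σ := orderOf_pos σ
    have : (σ ^ (orderOf σ - 1 + 1)) y = y := by
      rw [Nat.sub_add_cancel hd, pow_orderOf_eq_one]; rfl
    have hyW : y ∈ Ws := this ▸ hall (orderOf σ - 1)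
    exact hny hyW.2
  -- U closed under σ
  have hU : ∀ w, τ.SameCycle x w → τ.SameCycle x (σ w) := by
    intro w hw
    by_cases h1 : w = x
    · subst h1
      have := hy.apply_right
      rwa [hτy] at this
    by_cases h2 : w = y
    · subst h2
      have := (Equiv.Perm.SameCycle.refl τ x).apply_right
      rwa [hτx] at this
    · have := hw.apply_right
      rwa [hτz w h1 h2] at this
  have hpow : ∀ (w : α), τ.SameCycle x w → ∀ m : ℕ, τ.SameCycle x ((σ ^ m) w) := by
    intro w hw m
    induction m with
    | zero => simpa using hw
    | succ m ih =>
      have h : (σ ^ (m + 1)) w = σ ((σ ^ m) w) := by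
        rw [pow_succ', Equiv.Perm.mul_apply]
      rw [h]; exact hU _ ih
  rcases hz with h | h
  · obtain ⟨i, _, rfl⟩ := h.exists_pow_eq'
    exact hpow x (Equiv.Perm.SameCycle.refl τ x) i
  · obtain ⟨i, _, rfl⟩ := h.exists_pow_eq'
    exact hpow y hy i

lemma exists_valid_single_cycle {α V : Type*} [Fintype α] [DecidableEq α]
    (hd tl : α → V) (σ₀ : Equiv.Perm α) (h₀ : ∀ e, tl (σ₀ e) = hd e)
    (hconn : ∀ C : Set α, C.Nonempty → C ≠ Set.univ →
      ∃ a ∈ C, ∃ b ∉ C, hd a = hd b ∨ tl a = tl b ∨ hd a = tl b ∨ tl a = hd b)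
    (e₀ : α) :
    ∃ σ : Equiv.Perm α, (∀ e, tl (σ e) = hd e) ∧ ∀ z, σ.SameCycle e₀ z := by
  classical
  set S : Finset (Equiv.Perm α) :=
    Finset.univ.filter (fun σ => ∀ e, tl (σ e) = hd e) with hS
  have hS₀ : σ₀ ∈ S := by simp [hS, h₀]
  obtain ⟨σ, hσS, hmax⟩ := Finset.exists_max_image S
    (fun σ => ({z | σ.SameCycle e₀ z}).ncard) ⟨σ₀, hS₀⟩
  have hσ : ∀ e, tl (σ e) = hd e := by
    simpa [hS] using hσS
  refine ⟨σ, hσ, ?_⟩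
  by_contra hnot
  push_neg at hnot
  obtain ⟨z₀, hz₀⟩ := hnot
  set C : Set α := {z | σ.SameCycle e₀ z} with hC
  have hCne : C.Nonempty := ⟨e₀, Equiv.Perm.SameCycle.refl σ e₀⟩
  have hCuniv : C ≠ Set.univ := by
    intro h
    have : z₀ ∈ C := by rw [h]; exact Set.mem_univ z₀
    exact hz₀ this
  obtain ⟨a, ha, b, hb, hcase⟩ := hconn C hCne hCuniv
  -- produce x ∈ C, y ∉ C with hd x = hd y
  have hCinv : ∀ w, (σ⁻¹ w ∈ C ↔ w ∈ C) := by
    intro w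
    simp only [hC, Set.mem_setOf_eq]
    exact Equiv.Perm.sameCycle_symm_apply_right
  obtain ⟨x, hx, y, hyn, hxy⟩ :
      ∃ x ∈ C, ∃ y ∉ C, hd x = hd y := by
    rcases hcase with h | h | h | h
    · exact ⟨a, ha, b, hb, h⟩
    · refine ⟨σ⁻¹ a, (hCinv a).2 ha, σ⁻¹ b, fun hc => hb ((hCinv b).1 hc), ?_⟩
      have h1 : hd (σ⁻¹ a) = tl a := by
        have := hσ (σ⁻¹ a); rw [show σ (σ⁻¹ a) = a from (Equiv.eq_symm_apply σ).mp rfl] at this; exact this.symm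
      have h2 : hd (σ⁻¹ b) = tl b := by
        have := hσ (σ⁻¹ b); rw [show σ (σ⁻¹ b) = b from (Equiv.eq_symm_apply σ).mp rfl] at this; exact this.symm
      rw [h1, h2, h]
    · refine ⟨a, ha, σ⁻¹ b, fun hc => hb ((hCinv b).1 hc), ?_⟩
      have h2 : hd (σ⁻¹ b) = tl b := by
        have := hσ (σ⁻¹ b); rw [show σ (σ⁻¹ b) = b from (Equiv.eq_symm_apply σ).mp rfl] at this; exact this.symm
      rw [h2, h]
    · refine ⟨σ⁻¹ a, (hCinv a).2 ha, b, hb, ?_⟩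
      have h1 : hd (σ⁻¹ a) = tl a := by
        have := hσ (σ⁻¹ a); rw [show σ (σ⁻¹ a) = a from (Equiv.eq_symm_apply σ).mp rfl] at this; exact this.symm
      rw [h1, h]
  have hnsc : ¬ σ.SameCycle x y := fun h => hyn (hx.trans h)
  set τ := σ * Equiv.swap x y with hτdef
  have hτS : τ ∈ S := by
    simp only [hS, Finset.mem_filter, Finset.mem_univ, true_and]
    intro e
    rcases eq_or_ne e x with rfl | hex
    · have : τ e = σ y := by simp [hτdef]
      rw [this, hσ, ← hxy]
    rcases eq_or_ne e y with rfl | hey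
    · have : τ e = σ x := by simp [hτdef]
      rw [this, hσ, hxy]
    · have : τ e = σ e := by simp [hτdef, Equiv.swap_apply_of_ne_of_ne hex hey]
      rw [this, hσ]
  have hmerge : ∀ z, σ.SameCycle x z ∨ σ.SameCycle y z → τ.SameCycle x z :=
    fun z hz => merge_sameCycle σ x y hnsc z hz
  have hsub : C ⊆ {z | τ.SameCycle e₀ z} := by
    intro z hzC
    have h1 : τ.SameCycle x e₀ := hmerge e₀ (Or.inl hx.symm)
    have h2 : τ.SameCycle x z := hmerge z (Or.inl (hx.symm.trans hzC))
    exact h1.symm.trans h2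
  have hymem : y ∈ {z | τ.SameCycle e₀ z} := by
    have h1 : τ.SameCycle x e₀ := hmerge e₀ (Or.inl hx.symm)
    have h2 : τ.SameCycle x y := hmerge y (Or.inr (Equiv.Perm.SameCycle.refl σ y))
    exact h1.symm.trans h2
  have hssub : C ⊂ {z | τ.SameCycle e₀ z} :=
    ⟨hsub, fun h => hyn (h hymem)⟩
  have hlt : C.ncard < ({z | τ.SameCycle e₀ z}).ncard :=
    Set.ncard_lt_ncard hssub (Set.toFinite _)
  have := hmax τ hτS
  omega

/-- For positive integers `k`, `n` and integers `s, t` with `0 ≤ s < s + k ≤ t ≤ n * k`,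
there is a universal cycle of the set `W` of all `n`-letter words over the alphabet
`{0, 1, …, k}` of weight between `s` and `t`: a cyclic sequence of length `N = |W|`
whose `n`-windows enumerate `W` without repetition. -/
theorem exists_ucycle_words_weight_range (n k s t : ℕ) (hn : 0 < n) (hk : 0 < k)
    (hst : s + k ≤ t) (htn : t ≤ n * k)
    (N : ℕ) (hN : N = Set.ncard {w : Fin n → Fin (k + 1) | s ≤ wt w ∧ wt w ≤ t}) :
    ∃ f : ZMod N → Fin (k + 1),
      Function.Injective
        (fun i : ZMod N => fun j : Fin n => f (i + ((j : ℕ) : ZMod N))) ∧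
      Set.range (fun i : ZMod N => fun j : Fin n => f (i + ((j : ℕ) : ZMod N))) =
        {w : Fin n → Fin (k + 1) | s ≤ wt w ∧ wt w ≤ t} := by
  classical
  haveI hnz : NeZero n := ⟨hn.ne'⟩
  obtain ⟨uraw, hu⟩ := UcycAux.exists_word n k t htn
  have hsu : s ≤ wt uraw ∧ wt uraw ≤ t := ⟨by omega, le_of_eq hu⟩
  set u : UcycAux.Wd n k s t := ⟨uraw, hsu⟩ with hudef
  have hconnall : ∀ a b : UcycAux.Wd n k s t, Relation.ReflTransGen UcycAux.Rel a b := by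
    intro a b
    have h1 := UcycAux.conn_to hn hst u (by exact hu) _ a le_rfl
    have h2 := UcycAux.conn_to hn hst u (by exact hu) _ b le_rfl
    exact h1.trans ((@Relation.ReflTransGen.symmetric _ _ ⟨fun _ _ h => UcycAux.rel_symm h⟩).symm _ _ h2)
  obtain ⟨σ, hσvalid, hσall⟩ := exists_valid_single_cycle UcycAux.hdw UcycAux.tlw
      UcycAux.rotw UcycAux.tlw_rotw (by
        intro C hne huniv
        obtain ⟨a, ha⟩ := hne
        obtain ⟨b, hb⟩ := (Set.ne_univ_iff_exists_notMem C).1 huniv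
        obtain ⟨x, hx, y, hy, hxy⟩ := UcycAux.cross UcycAux.Rel C (hconnall a b) ha hb
        exact ⟨x, hx, y, hy, hxy⟩) u
  have hcard : Nat.card (UcycAux.Wd n k s t) = N := by
    rw [hN]; rfl
  haveI : Nonempty (UcycAux.Wd n k s t) := ⟨u⟩
  have hN0 : N ≠ 0 := by rw [← hcard]; exact Nat.card_pos.ne'
  haveI : NeZero N := ⟨hN0⟩
  have hcards : Fintype.card (UcycAux.Wd n k s t) = N := by
    rw [← Nat.card_eq_fintype_card]; exact hcard
  have hσN : σ ^ N = 1 := by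
    rcases eq_or_lt_of_le (Nat.one_le_iff_ne_zero.2 hN0) with h1 | h2
    · haveI : Subsingleton (UcycAux.Wd n k s t) :=
        Fintype.card_le_one_iff_subsingleton.1 (by omega)
      have : σ = 1 := Equiv.ext fun x => Subsingleton.elim _ _
      rw [this, one_pow]
    · have hex : ∃ x, σ x ≠ x := by
        by_contra hc; push_neg at hc
        have hone : σ = 1 := Equiv.ext fun x => hc x
        have hall : ∀ z, u = z := fun z => by
          have hz := hσall z; rw [hone] at hz; exact Equiv.Perm.sameCycle_one.1 hz
        have : Fintype.card (UcycAux.Wd n k s t) ≤ 1 :=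
          Fintype.card_le_one_iff.2 fun a b => ((hall a).symm.trans (hall b))
        omega
      obtain ⟨x, hx⟩ := hex
      have hcyc : σ.IsCycle := ⟨x, hx, fun y _ => (hσall x).symm.trans (hσall y)⟩
      have hsupp : σ.support = Finset.univ := by
        apply Finset.eq_univ_iff_forall.2
        intro y
        rw [Equiv.Perm.mem_support]
        intro hfix
        obtain ⟨i, hi⟩ := (hσall y).symm.trans (hσall x)
        rw [Equiv.Perm.zpow_apply_eq_self_of_apply_eq_self hfix] at hi
        exact hx (hi ▸ hfix)
      have horder : orderOf σ = N := by
        rw [hcyc.orderOf, hsupp, Finset.card_univ, hcards]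
      rw [← horder]; exact pow_orderOf_eq_one σ
  have powmod : ∀ m : ℕ, σ ^ m = σ ^ (m % N) := by
    intro m
    conv_lhs => rw [← Nat.div_add_mod m N]
    rw [pow_add, pow_mul, hσN, one_pow, one_mul]
  set g : ZMod N → UcycAux.Wd n k s t := fun i => (σ ^ i.val) u with hg
  have gcast : ∀ m : ℕ, g ((m : ℕ) : ZMod N) = (σ ^ m) u := by
    intro m
    show (σ ^ (ZMod.val ((m : ℕ) : ZMod N))) u = _
    rw [ZMod.val_natCast, ← powmod]
  have gsucc : ∀ i : ZMod N, g (i + 1) = σ (g i) := by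
    intro i
    have h1 : i + 1 = (((i.val + 1 : ℕ)) : ZMod N) := by
      push_cast
      rw [ZMod.natCast_val, ZMod.cast_id]
    rw [h1, gcast, pow_succ', Equiv.Perm.mul_apply]
  have gsurj : Function.Surjective g := by
    intro a
    obtain ⟨i, _, hi⟩ := (hσall a).exists_pow_eq'
    exact ⟨(i : ZMod N), by rw [gcast]; exact hi⟩
  have ginj : Function.Injective g :=
    ((Fintype.bijective_iff_surjective_and_card g).2 ⟨gsurj, by rw [ZMod.card, hcards]⟩).1
  have hwin : ∀ (m : ℕ) (hm : m < n) (i : ZMod N),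
      (g (i + (m : ZMod N))).1 ⟨0, hn⟩ = (g i).1 ⟨m, hm⟩ := by
    intro m
    induction m with
    | zero => intro hm i; simp only [Nat.cast_zero, add_zero]
    | succ m ih =>
      intro hm i
      have h1 : (i + ((m + 1 : ℕ) : ZMod N)) = (i + 1) + (m : ZMod N) := by
        push_cast; ring
      rw [h1, ih (by omega) (i + 1), gsucc]
      have h2 : m < n - 1 := by omega
      have h3 := congrFun (hσvalid (g i)) ⟨m, h2⟩
      simp only [UcycAux.tlw, UcycAux.hdw] at h3
      exact h3
  have hfun : (fun i : ZMod N => fun j : Fin n =>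
      (g (i + ((j : ℕ) : ZMod N))).1 ⟨0, hn⟩) = fun i => (g i).1 := by
    funext i j
    rw [hwin j.1 j.2 i]
  refine ⟨fun i => (g i).1 ⟨0, hn⟩, ?_, ?_⟩
  · rw [hfun]
    exact fun a b hab => ginj (Subtype.ext hab)
  · rw [hfun]
    have hcomp : (fun i : ZMod N => (g i).1) = (Subtype.val ∘ g) := rfl
    rw [hcomp, Set.range_comp, Set.range_eq_univ.2 gsurj, Set.image_univ,
      Subtype.range_coe_subtype]
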